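/- Let P be a Markov kernel on a measurable space (E, ℰ), let V : E → [1, ∞) be measurable, and let b ≥ 0, b' ≥ 0, λ > 0, 0 < δ < 1, d' ≥ 1 and 0 < β < 1. Define the taming function F : [1, ∞) → ℕ by F(z) = ⌈λz^δ⌉ for z > d' and F(z) = 1 for z ≤ d'. Assume: (i) the weak drift condition ∫ V(y) P(x, dy) ≤ V(x) + b for all x ∈ E; and (ii) the subsampled drift condition ∫ V(y) P^{F(V(x))}(x, dy) ≤ βV(x) + b'·1_{[V(x) ≤ d']} for all x ∈ E, where Pᵏ is the k-step transition kernel. Then for every β* with β < β* < 1 there exists a finite constant h* such that for all x ∈ E and all real z with V(x) ≤ z and z ≥ h*, one has ∫ V(y) P^{F(z)}(x, dy) ≤ β*z. -/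

import Mathlib

open MeasureTheory ProbabilityTheory
open scoped ENNReal NNReal

/-- The `k`-step transition kernel: the `k`-fold composition of `P` with itself. -/
noncomputable def iterKernel {E : Type*} [MeasurableSpace E] (P : Kernel E E) : ℕ → Kernel E E
  | 0 => Kernel.id
  | n + 1 => P ∘ₖ iterKernel P n

/-- The taming function `F(z) = ⌈λ z^δ⌉` for `z > d'` and `F(z) = 1` for `z ≤ d'`. -/
noncomputable def tamingF (lam δ d' : ℝ) (z : ℝ) : ℕ :=
  if z ≤ d' then 1 else ⌈lam * z ^ δ⌉₊

instance iterKernel.isMarkovKernel {E : Type*} [MeasurableSpace E] (P : Kernel E E)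
    [IsMarkovKernel P] (n : ℕ) : IsMarkovKernel (iterKernel P n) := by
  induction n with
  | zero => rw [iterKernel]; infer_instance
  | succ n ih => rw [iterKernel]; infer_instance

lemma iterKernel_add {E : Type*} [MeasurableSpace E] (P : Kernel E E)
    [IsMarkovKernel P] (m n : ℕ) :
    iterKernel P (m + n) = iterKernel P m ∘ₖ iterKernel P n := by
  induction m with
  | zero => simp only [Nat.zero_add]; rw [show iterKernel P 0 = Kernel.id from rfl,
      Kernel.id_comp]
  | succ m ih =>
      rw [show m + 1 + n = (m + n) + 1 by omega]
      rw [show iterKernel P ((m + n) + 1) = P ∘ₖ iterKernel P (m + n) from rfl,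
        show iterKernel P (m + 1) = P ∘ₖ iterKernel P m from rfl, ih, Kernel.comp_assoc]

/-- Iterated weak drift: `∫ V dP^k(x,·) ≤ V x + k b`. -/
lemma weak_drift_iter {E : Type*} [MeasurableSpace E] (P : Kernel E E) [IsMarkovKernel P]
    (V : E → ℝ≥0∞) (hV : Measurable V) (b : ℝ)
    (hweak : ∀ x : E, ∫⁻ y, V y ∂(P x) ≤ V x + ENNReal.ofReal b) :
    ∀ (k : ℕ) (x : E), ∫⁻ y, V y ∂(iterKernel P k x) ≤ V x + k * ENNReal.ofReal b := by
  intro k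
  induction k with
  | zero =>
      intro x
      simp [iterKernel, Kernel.id_apply, lintegral_dirac' _ hV]
  | succ k ih =>
      intro x
      rw [iterKernel, Kernel.lintegral_comp _ _ _ hV]
      calc ∫⁻ y, ∫⁻ w, V w ∂P y ∂(iterKernel P k x)
          ≤ ∫⁻ y, (V y + ENNReal.ofReal b) ∂(iterKernel P k x) :=
            lintegral_mono fun y => hweak y
        _ = (∫⁻ y, V y ∂(iterKernel P k x)) + ENNReal.ofReal b := by
            rw [lintegral_add_right _ measurable_const, lintegral_const,
              measure_univ, mul_one]
        _ ≤ V x + k * ENNReal.ofReal b + ENNReal.ofReal b := by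
            exact add_le_add_left (ih x) _
        _ = V x + (k + 1 : ℕ) * ENNReal.ofReal b := by
            push_cast
            ring


/-- key inequality (2) in the corrected proof of Theorem 16.
Under the weak drift condition (i) and the subsampled geometric drift condition (ii)
for the taming function `F`, for every `β* ∈ (β, 1)` there is a finite constant `h*`
such that `∫ V dP^{F(z)}(x,·) ≤ β* z` whenever `V x ≤ z` and `z ≥ h*`. -/
theorem tamed_chain_dominating_bound
    {E : Type*} [MeasurableSpace E] (P : Kernel E E) [IsMarkovKernel P]
    (V : E → ℝ≥0∞) (hV : Measurable V)
    (hV1 : ∀ x, 1 ≤ V x) (hVfin : ∀ x, V x ≠ ∞)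
    (b b' lam δ d' β : ℝ)
    (hb : 0 ≤ b) (hb' : 0 ≤ b') (hlam : 0 < lam)
    (hδ0 : 0 < δ) (hδ1 : δ < 1) (hd' : 1 ≤ d') (hβ0 : 0 < β) (hβ1 : β < 1)
    -- (i) weak drift condition for the one-step kernel
    (hweak : ∀ x : E, ∫⁻ y, V y ∂(P x) ≤ V x + ENNReal.ofReal b)
    -- (ii) geometric drift condition for the chain subsampled at the taming times
    (hsub : ∀ x : E,
      ∫⁻ y, V y ∂(iterKernel P (tamingF lam δ d' ((V x).toReal)) x)
        ≤ ENNReal.ofReal β * V x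
          + (if (V x).toReal ≤ d' then ENNReal.ofReal b' else 0)) :
    ∀ βs : ℝ, β < βs → βs < 1 →
      ∃ hstar : ℝ, ∀ (x : E) (z : ℝ), (V x).toReal ≤ z → hstar ≤ z →
        ∫⁻ y, V y ∂(iterKernel P (tamingF lam δ d' z) x) ≤ ENNReal.ofReal (βs * z) := by
  intro βs hβsl hβsu
  set ε := βs - β with hε
  have hε0 : 0 < ε := by simp [hε]; linarith
  refine ⟨max (d' + 1) (max (2 * b' / ε) ((2 * (b * lam) / ε) ^ (1 / (1 - δ)))), ?_⟩
  intro x z hVz hzh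
  have hzd : d' < z := lt_of_lt_of_le (by linarith) (le_trans (le_max_left _ _) hzh)
  have hz1 : (1 : ℝ) ≤ z := le_trans (by linarith) hzd.le
  have hz0 : 0 < z := lt_of_lt_of_le one_pos hz1
  set a := (V x).toReal with ha
  have ha0 : 0 ≤ a := ENNReal.toReal_nonneg
  have ha1 : (1 : ℝ) ≤ a := by
    have := ENNReal.toReal_mono (hVfin x) (hV1 x)
    simpa using this
  set m := tamingF lam δ d' a with hm
  set n := tamingF lam δ d' z with hn
  -- F(z) uses the ceiling branch
  have hnval : n = ⌈lam * z ^ δ⌉₊ := by rw [hn, tamingF, if_neg (not_le.2 hzd)]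
  have hzpow : 0 < lam * z ^ δ := mul_pos hlam (Real.rpow_pos_of_pos hz0 δ)
  have hn1 : 1 ≤ n := by
    rw [hnval]
    exact Nat.one_le_ceil_iff.2 hzpow
  -- monotonicity of F : m ≤ n
  have hmn : m ≤ n := by
    rw [hm, hnval, tamingF]
    split_ifs with h
    · exact Nat.one_le_ceil_iff.2 hzpow
    · exact Nat.ceil_mono <| mul_le_mul_of_nonneg_left
        (Real.rpow_le_rpow ha0 hVz hδ0.le) hlam.le
  have hm1 : 1 ≤ m := by
    rw [hm, tamingF]
    split_ifs with h
    · exact le_refl 1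
    · exact Nat.one_le_ceil_iff.2 (mul_pos hlam (Real.rpow_pos_of_pos (by linarith) δ))
  set k := n - m with hk
  have hkm : n = k + m := by omega
  -- the real bound on k
  have hkreal : (k : ℝ) ≤ lam * z ^ δ := by
    have h1 : (n : ℝ) < lam * z ^ δ + 1 := by
      rw [hnval]; exact Nat.ceil_lt_add_one hzpow.le
    have h2 : (k : ℝ) ≤ (n : ℝ) - 1 := by
      have : k ≤ n - 1 := by omega
      have := (Nat.cast_le (α := ℝ)).2 this
      have hcast : ((n - 1 : ℕ) : ℝ) = (n : ℝ) - 1 := by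
        push_cast [Nat.cast_sub hn1]; ring
      linarith [hcast ▸ this]
    linarith
  -- decompose the integral
  have hdecomp : ∫⁻ y, V y ∂(iterKernel P n x)
      = ∫⁻ y, (∫⁻ w, V w ∂(iterKernel P k y)) ∂(iterKernel P m x) := by
    rw [hkm, iterKernel_add, Kernel.lintegral_comp _ _ _ hV]
  have hstep1 : ∫⁻ y, V y ∂(iterKernel P n x)
      ≤ ENNReal.ofReal β * V x + ENNReal.ofReal b' + (k : ℝ≥0∞) * ENNReal.ofReal b := by
    rw [hdecomp]
    calc ∫⁻ y, (∫⁻ w, V w ∂(iterKernel P k y)) ∂(iterKernel P m x)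
        ≤ ∫⁻ y, (V y + (k : ℝ≥0∞) * ENNReal.ofReal b) ∂(iterKernel P m x) :=
          lintegral_mono fun y => by
            simpa using weak_drift_iter P V hV b hweak k y
      _ = (∫⁻ y, V y ∂(iterKernel P m x)) + (k : ℝ≥0∞) * ENNReal.ofReal b := by
          rw [lintegral_add_right _ measurable_const, lintegral_const,
            measure_univ, mul_one]
      _ ≤ ENNReal.ofReal β * V x + ENNReal.ofReal b' + (k : ℝ≥0∞) * ENNReal.ofReal b := by
          refine add_le_add_left ?_ _
          refine le_trans (hsub x) (add_le_add_right ?_ _)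
          split_ifs <;> simp
  -- pass to reals
  have hVx_le : V x ≤ ENNReal.ofReal z := by
    rw [← ENNReal.ofReal_toReal (hVfin x)]
    exact ENNReal.ofReal_le_ofReal hVz
  have hstep2 : ∫⁻ y, V y ∂(iterKernel P n x)
      ≤ ENNReal.ofReal (β * z + b' + lam * z ^ δ * b) := by
    refine le_trans hstep1 ?_
    rw [ENNReal.ofReal_add (by positivity) (by positivity),
      ENNReal.ofReal_add (by positivity) hb']
    refine add_le_add (add_le_add ?_ le_rfl) ?_
    · rw [ENNReal.ofReal_mul hβ0.le]
      exact mul_le_mul_right hVx_le _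
    · rw [ENNReal.ofReal_mul (by positivity), ← ENNReal.ofReal_natCast]
      exact mul_le_mul_left (ENNReal.ofReal_le_ofReal hkreal) _
  refine le_trans hstep2 (ENNReal.ofReal_le_ofReal ?_)
  -- the real inequality: β z + b' + lam z^δ b ≤ βs z
  have hbound1 : b' ≤ ε / 2 * z := by
    have h1 : 2 * b' / ε ≤ z := le_trans (le_trans (le_max_left _ _) (le_max_right _ _)) hzh
    rw [div_le_iff₀ hε0] at h1
    nlinarith
  have hbound2 : lam * z ^ δ * b ≤ ε / 2 * z := by
    set c := 2 * (b * lam) / ε with hc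
    have hc0 : 0 ≤ c := by positivity
    have h1 : c ^ (1 / (1 - δ)) ≤ z :=
      le_trans (le_trans (le_max_right _ _) (le_max_right _ _)) hzh
    have h1δ : 0 < 1 - δ := by linarith
    have h2 : c ≤ z ^ (1 - δ) := by
      calc c = (c ^ (1 / (1 - δ))) ^ (1 - δ) := by
              rw [← Real.rpow_mul hc0, one_div, inv_mul_cancel₀ (ne_of_gt h1δ),
                Real.rpow_one]
        _ ≤ z ^ (1 - δ) := Real.rpow_le_rpow (by positivity) h1 h1δ.le
    have h3 : c * z ^ δ ≤ z ^ (1 - δ) * z ^ δ :=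
      mul_le_mul_of_nonneg_right h2 (Real.rpow_pos_of_pos hz0 δ).le
    rw [← Real.rpow_add hz0] at h3
    norm_num at h3
    -- h3 : c * z ^ δ ≤ z
    have h4 : 2 * (b * lam) * z ^ δ ≤ ε * z := by
      rw [hc, div_mul_eq_mul_div, div_le_iff₀ hε0] at h3
      calc 2 * (b * lam) * z ^ δ ≤ z * ε := h3
        _ = ε * z := mul_comm _ _
    nlinarith [Real.rpow_pos_of_pos hz0 δ]
  have : β * z + ε * z = βs * z := by rw [hε]; ring
  nlinarith
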